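/- For integers n ≥ l ≥ 1: Σ_{j=0}^{n-l} C(n, j+l) ((j+l-1)!/j!) (-1)^j = (l-1)!. -/

import Mathlib

open Finset

lemma alt_zero (k : ℕ) (hk : 1 ≤ k) :
    ∑ j ∈ range (k + 1), ((-1 : ℝ)) ^ j * (k.choose j : ℝ) = 0 := by
  have h := Int.alternating_sum_range_choose (n := k)
  rw [if_neg (by omega)] at h
  have : ((∑ i ∈ range (k + 1), (-1 : ℤ) ^ i * ↑(k.choose i) : ℤ) : ℝ) = 0 := by
    rw [h]; norm_num
  push_cast at this
  exact this

lemma aux_term (n m j : ℕ) (h : j + m ≤ n) :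
    (n.choose (j + m) : ℝ) * ((j + m).factorial / j.factorial) =
      (n.factorial / (n - m).factorial) * ((n - m).choose j : ℝ) := by
  have h1 : n.choose (j + m) * (j + m).factorial * (n - (j + m)).factorial = n.factorial :=
    Nat.choose_mul_factorial_mul_factorial h
  have hj : j ≤ n - m := by omega
  have h2 : (n - m).choose j * j.factorial * (n - m - j).factorial = (n - m).factorial :=
    Nat.choose_mul_factorial_mul_factorial hj
  have hnm : n - (j + m) = n - m - j := by omega
  have key : n.choose (j + m) * (j + m).factorial * (n - m).factorial =
      n.factorial * ((n - m).choose j * j.factorial) := by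
    apply Nat.eq_of_mul_eq_mul_right (Nat.factorial_pos (n - m - j))
    calc n.choose (j + m) * (j + m).factorial * (n - m).factorial * (n - m - j).factorial
        = (n.choose (j + m) * (j + m).factorial * (n - (j + m)).factorial) * (n - m).factorial := by
          rw [hnm]; ring
      _ = n.factorial * (n - m).factorial := by rw [h1]
      _ = n.factorial * ((n - m).choose j * j.factorial * (n - m - j).factorial) := by rw [h2]
      _ = n.factorial * ((n - m).choose j * j.factorial) * (n - m - j).factorial := by ring
  have kf : (n.choose (j + m) : ℝ) * (j + m).factorial * (n - m).factorial =
      n.factorial * ((n - m).choose j * j.factorial) := by exact_mod_cast congrArg (Nat.cast (R := ℝ)) key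
  have hjf : (j.factorial : ℝ) ≠ 0 := by positivity
  have hnmf : ((n - m).factorial : ℝ) ≠ 0 := by positivity
  field_simp
  linarith [kf]

lemma aux_main (m : ℕ) : ∀ n, m + 1 ≤ n →
    ∑ j ∈ range (n - m), (n.choose (j + m + 1) : ℝ) *
        ((j + m).factorial / j.factorial) * (-1) ^ j = m.factorial := by
  intro n
  induction n with
  | zero => omega
  | succ n ih =>
    intro hn
    rcases Nat.lt_or_ge n (m + 1) with h | h
    · -- base case: n + 1 = m + 1, i.e. n = m
      have hnm : n = m := by omega
      have hr : n + 1 - m = 1 := by omega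
      rw [hr]
      simp [hnm]
    · -- inductive step
      have hrange : n + 1 - m = (n - m) + 1 := by omega
      rw [hrange]
      have pascal : ∀ j : ℕ, ((n + 1).choose (j + m + 1) : ℝ) =
          (n.choose (j + m) : ℝ) + (n.choose (j + m + 1) : ℝ) := by
        intro j
        have := Nat.choose_succ_succ n (j + m)
        exact_mod_cast congrArg (Nat.cast (R := ℝ)) this
      have split : ∑ j ∈ range (n - m + 1), ((n + 1).choose (j + m + 1) : ℝ) *
            ((j + m).factorial / j.factorial) * (-1) ^ j =
          (∑ j ∈ range (n - m + 1), (n.choose (j + m) : ℝ) *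
            ((j + m).factorial / j.factorial) * (-1) ^ j) +
          (∑ j ∈ range (n - m + 1), (n.choose (j + m + 1) : ℝ) *
            ((j + m).factorial / j.factorial) * (-1) ^ j) := by
        rw [← Finset.sum_add_distrib]
        apply Finset.sum_congr rfl
        intro j _
        rw [pascal j]; ring
      rw [split]
      have sum1 : ∑ j ∈ range (n - m + 1), (n.choose (j + m) : ℝ) *
          ((j + m).factorial / j.factorial) * (-1) ^ j = 0 := by
        have : ∀ j ∈ range (n - m + 1), (n.choose (j + m) : ℝ) *
            ((j + m).factorial / j.factorial) * (-1) ^ j =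
            (n.factorial / (n - m).factorial) * ((-1 : ℝ) ^ j * ((n - m).choose j : ℝ)) := by
          intro j hj
          rw [Finset.mem_range] at hj
          rw [aux_term n m j (by omega)]; ring
        rw [Finset.sum_congr rfl this, ← Finset.mul_sum, alt_zero (n - m) (by omega), mul_zero]
      have sum2 : ∑ j ∈ range (n - m + 1), (n.choose (j + m + 1) : ℝ) *
          ((j + m).factorial / j.factorial) * (-1) ^ j = m.factorial := by
        rw [Finset.sum_range_succ]
        have hz : n.choose (n - m + m + 1) = 0 := by
          apply Nat.choose_eq_zero_of_lt; omega
        rw [hz]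
        simp only [Nat.cast_zero, zero_mul, add_zero]
        exact ih h
      rw [sum1, sum2, zero_add]

theorem binomial_factorial_alternating_sum (n l : ℕ) (hl : 1 ≤ l) (hn : l ≤ n) :
    ∑ j ∈ Finset.range (n - l + 1), (n.choose (j + l) : ℝ) *
        (((j + l - 1).factorial : ℝ) / (j.factorial : ℝ)) * (-1) ^ j =
      ((l - 1).factorial : ℝ) := by
  obtain ⟨m, rfl⟩ : ∃ m, l = m + 1 := ⟨l - 1, by omega⟩
  have h1 : n - (m + 1) + 1 = n - m := by omega
  have h2 : ∀ j : ℕ, j + (m + 1) - 1 = j + m := fun j => by omega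
  simp only [h1, h2, Nat.add_sub_cancel]
  have := aux_main m n hn
  convert this using 2 with j
  rfl
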